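/- Let ξ be a row exchangeable array with row distributions (μ_i). Fix m < M and N ∈ ℕ. Then the block X = {ξ_{ij} : i ≤ m, j ≤ N} and the collection {(μ_i, (ξ_{ij})_{j≤N}) : m < i ≤ M} are conditionally independent given (μ₁,...,μ_m). -/

import Mathlib

open MeasureTheory ProbabilityTheory TopologicalSpace

noncomputable section

section AuxSection
open Set Filter
namespace Stmt19Aux
variable {Ω : Type*} {G m0 : MeasurableSpace Ω} {P : Measure Ω} [IsProbabilityMeasure P]

set_option linter.unusedSectionVars false
set_option linter.unusedVariables false

lemma aux_aesm (hG : G ≤ m0) {k : Ω → ℝ} (hk : AEStronglyMeasurable[G] k P) :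
    AEStronglyMeasurable k P :=
  ((hk.stronglyMeasurable_mk.mono hG).aestronglyMeasurable).congr hk.ae_eq_mk.symm

/-- pull-out for integrals -/
lemma aux_pull (hG : G ≤ m0) {k u : Ω → ℝ} (hk : AEStronglyMeasurable[G] k P)
    {c : ℝ} (hkbd : ∀ᵐ ω ∂P, ‖k ω‖ ≤ c) (hu : Integrable u P) :
    ∫ ω, k ω * u ω ∂P = ∫ ω, k ω * (P[u|G]) ω ∂P := by
  have h1 : Integrable (fun ω => k ω * u ω) P := hu.bdd_mul (aux_aesm hG hk) hkbd
  have h2 := condExp_mul_of_aestronglyMeasurable_left hk h1 hu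
  calc ∫ ω, k ω * u ω ∂P = ∫ ω, (P[(fun ω => k ω * u ω)|G]) ω ∂P :=
        (integral_condExp hG).symm
    _ = ∫ ω, k ω * (P[u|G]) ω ∂P := integral_congr_ae h2

lemma aux_nonneg (hG : G ≤ m0) {E : Set Ω} :
    0 ≤ᵐ[P] P[E.indicator (fun _ => (1:ℝ))|G] :=
  condExp_nonneg (Eventually.of_forall fun ω => Set.indicator_nonneg (fun _ _ => zero_le_one) ω)

lemma aux_le_one (hG : G ≤ m0) {E : Set Ω} (hE : MeasurableSet E) :
    ∀ᵐ ω ∂P, (P[E.indicator (fun _ => (1:ℝ))|G]) ω ≤ 1 := by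
  have h := condExp_mono (μ := P) (m := G)
      ((integrable_const (1:ℝ)).indicator hE) (integrable_const (1:ℝ))
      (Eventually.of_forall fun ω => Set.indicator_le_self' (fun _ _ => zero_le_one) ω)
  rw [condExp_const hG] at h
  exact h

lemma aux_bd (hG : G ≤ m0) {E : Set Ω} (hE : MeasurableSet E) :
    ∀ᵐ ω ∂P, ‖(P[E.indicator (fun _ => (1:ℝ))|G]) ω‖ ≤ 1 := by
  filter_upwards [aux_nonneg (P := P) hG (E := E), aux_le_one hG hE] with ω h0 h1
  rw [Real.norm_eq_abs, abs_of_nonneg h0]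
  exact h1

/-- set integral as integral of indicator-product -/
lemma aux_si {D : Set Ω} (hD : MeasurableSet D) (f : Ω → ℝ) :
    ∫ ω in D, f ω ∂P = ∫ ω, D.indicator (fun _ => (1:ℝ)) ω * f ω ∂P := by
  rw [← integral_indicator hD]
  congr 1
  funext ω
  by_cases h : ω ∈ D <;> simp [h]

/-- double pull-out -/
lemma aux_po (hG : G ≤ m0) {E D : Set Ω} (hE : MeasurableSet E) (hD : MeasurableSet D) :
    ∫ ω in D, (P[E.indicator (fun _ => (1:ℝ))|G]) ω ∂P
      = ∫ ω in E, (P[D.indicator (fun _ => (1:ℝ))|G]) ω ∂P := by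
  have hint : ∀ (F : Set Ω), MeasurableSet F → Integrable (F.indicator (fun _ => (1:ℝ))) P :=
    fun F hF => (integrable_const (1:ℝ)).indicator hF
  have key : ∀ (F₁ F₂ : Set Ω), MeasurableSet F₁ → MeasurableSet F₂ →
      ∫ ω in F₂, (P[F₁.indicator (fun _ => (1:ℝ))|G]) ω ∂P
        = ∫ ω, (P[F₁.indicator (fun _ => (1:ℝ))|G]) ω
            * (P[F₂.indicator (fun _ => (1:ℝ))|G]) ω ∂P := by
    intro F₁ F₂ hF₁ hF₂
    rw [aux_si hF₂]
    rw [show (fun ω => F₂.indicator (fun _ => (1:ℝ)) ω * (P[F₁.indicator (fun _ => (1:ℝ))|G]) ω)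
        = fun ω => (P[F₁.indicator (fun _ => (1:ℝ))|G]) ω * F₂.indicator (fun _ => (1:ℝ)) ω
        from funext fun ω => mul_comm _ _]
    exact aux_pull hG (stronglyMeasurable_condExp.aestronglyMeasurable)
      (aux_bd hG hF₁) (hint F₂ hF₂)
  rw [key E D hE hD, key D E hD hE]
  congr 1; funext ω; ring

/-- π-λ stage: if the identity holds on a generating π-system containing `univ`,
it holds for all measurable sets. -/
lemma aux_stage {γ : Type*} [mγ : MeasurableSpace γ] {T : Ω → γ} (hT : Measurable T)
    {Cgen : Set (Set γ)} (hgen : MeasurableSpace.generateFrom Cgen = mγ)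
    (hpi : IsPiSystem Cgen) (huniv : univ ∈ Cgen)
    {D C₀ : Set Ω} (hD : MeasurableSet D) (hC₀ : MeasurableSet C₀)
    {w : Ω → ℝ} (hw : Measurable w)
    (base : ∀ A ∈ Cgen, P (T ⁻¹' A ∩ D) = ∫⁻ ω in T ⁻¹' A ∩ C₀, ENNReal.ofReal (w ω) ∂P)
    (hfin : ∫⁻ ω in C₀, ENNReal.ofReal (w ω) ∂P ≠ ⊤) :
    ∀ A, MeasurableSet A → P (T ⁻¹' A ∩ D) = ∫⁻ ω in T ⁻¹' A ∩ C₀, ENNReal.ofReal (w ω) ∂P := by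
  set f : Ω → ENNReal := fun ω => ENNReal.ofReal (w ω) with hf
  have hfm : Measurable f := hw.ennreal_ofReal
  set ν₁ : Measure γ := Measure.map T (P.restrict D) with hν₁
  set ν₂ : Measure γ := Measure.map T ((P.restrict C₀).withDensity f) with hν₂
  have happ₁ : ∀ A, MeasurableSet A → ν₁ A = P (T ⁻¹' A ∩ D) := by
    intro A hA
    rw [hν₁, Measure.map_apply hT hA, Measure.restrict_apply (hT hA)]
  have happ₂ : ∀ A, MeasurableSet A → ν₂ A = ∫⁻ ω in T ⁻¹' A ∩ C₀, f ω ∂P := by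
    intro A hA
    rw [hν₂, Measure.map_apply ?_ hA, withDensity_apply _ (hT hA),
      Measure.restrict_restrict (hT hA)]
    · exact hT.comp measurable_id
  have hν₂fin : IsFiniteMeasure ν₂ := by
    constructor
    rw [happ₂ univ MeasurableSet.univ]
    refine lt_of_le_of_lt ?_ hfin.lt_top
    exact lintegral_mono_set (by simp)
  have hν₁fin : IsFiniteMeasure ν₁ := by
    constructor
    rw [happ₁ univ MeasurableSet.univ]
    exact lt_of_le_of_lt (measure_mono (inter_subset_right)) (measure_lt_top P D)
  have hsame : ν₁ = ν₂ := by
    refine MeasureTheory.ext_of_generate_finite Cgen hgen.symm hpi ?_ ?_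
    · intro s hs
      rw [happ₁ s (hgen ▸ MeasurableSpace.measurableSet_generateFrom hs),
        happ₂ s (hgen ▸ MeasurableSpace.measurableSet_generateFrom hs)]
      exact base s hs
    · rw [happ₁ univ MeasurableSet.univ, happ₂ univ MeasurableSet.univ]
      exact base univ huniv
  intro A hA
  rw [← happ₁ A hA, ← happ₂ A hA, hsame]

lemma aux_ind_inter (U V : Set Ω) (ω : Ω) :
    (U ∩ V).indicator (fun _ => (1:ℝ)) ω
      = U.indicator (fun _ => (1:ℝ)) ω * V.indicator (fun _ => (1:ℝ)) ω := by
  by_cases hU : ω ∈ U <;> by_cases hV : ω ∈ V <;> simp [Set.indicator_apply, hU, hV]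

lemma aux_conv (hG : G ≤ m0) {R E : Set Ω} :
    ∫⁻ ω in R, ENNReal.ofReal ((P[E.indicator (fun _ => (1:ℝ))|G]) ω) ∂P
      = ENNReal.ofReal (∫ ω in R, (P[E.indicator (fun _ => (1:ℝ))|G]) ω ∂P) :=
  (ofReal_integral_eq_lintegral_ofReal integrable_condExp.restrict
    (ae_restrict_of_ae (aux_nonneg hG))).symm

lemma aux_setint_nonneg (hG : G ≤ m0) {R E : Set Ω} :
    0 ≤ ∫ ω in R, (P[E.indicator (fun _ => (1:ℝ))|G]) ω ∂P :=
  integral_nonneg_of_ae (ae_restrict_of_ae (aux_nonneg hG))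

end Stmt19Aux

namespace Stmt19Aux
variable {α β : Type*} [MeasurableSpace α] [MeasurableSpace β]

def Rect (ι α : Type*) [MeasurableSpace α] : Set (Set (ι → α)) :=
  pi univ '' pi univ (fun _ : ι => {s : Set α | MeasurableSet s})

lemma rect_gen (ι : Type*) [Finite ι] :
    MeasurableSpace.generateFrom (Rect ι α) = MeasurableSpace.pi :=
  generateFrom_pi

lemma rect_pi (ι : Type*) : IsPiSystem (Rect ι α) := isPiSystem_pi

lemma rect_span (ι : Type*) [Finite ι]  : IsCountablySpanning (Rect ι α) :=
  IsCountablySpanning.pi fun _ => isCountablySpanning_measurableSet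

lemma rect_univ_mem (ι : Type*) : (univ : Set (ι → α)) ∈ Rect ι α :=
  ⟨fun _ => univ, fun _ _ => MeasurableSet.univ, by simp⟩

def Cco (α β : Type*) [MeasurableSpace α] [MeasurableSpace β] (ι : Type*) :
    Set (Set (α × (ι → β))) :=
  image2 (· ×ˢ ·) {s : Set α | MeasurableSet s} (Rect ι β)

lemma cco_gen (ι : Type*) [Finite ι] :
    MeasurableSpace.generateFrom (Cco α β ι) = Prod.instMeasurableSpace :=
  generateFrom_eq_prod MeasurableSpace.generateFrom_measurableSet (rect_gen ι)
    isCountablySpanning_measurableSet (rect_span ι)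

lemma cco_pi (ι : Type*) : IsPiSystem (Cco α β ι) :=
  MeasurableSpace.isPiSystem_measurableSet.prod (rect_pi ι)

lemma cco_span (ι : Type*) [Finite ι] : IsCountablySpanning (Cco α β ι) :=
  isCountablySpanning_measurableSet.prod (rect_span ι)

lemma cco_univ_mem (ι : Type*) : (univ : Set (α × (ι → β))) ∈ Cco α β ι := by
  have : ((univ : Set α) ×ˢ (univ : Set (ι → β))) ∈ Cco α β ι :=
    Set.mem_image2_of_mem (MeasurableSet.univ : MeasurableSet (univ : Set α))
      (rect_univ_mem (α := β) ι)
  rwa [univ_prod_univ] at this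

def CgenA (ι ι' α : Type*) [MeasurableSpace α] : Set (Set (ι → ι' → α)) :=
  pi univ '' pi univ (fun _ : ι => Rect ι' α)

lemma cgenA_gen (ι ι' : Type*) [Finite ι] [Finite ι'] :
    MeasurableSpace.generateFrom (CgenA ι ι' α) = MeasurableSpace.pi :=
  generateFrom_eq_pi (fun _ => rect_gen ι') (fun _ => rect_span ι')

lemma cgenA_pi (ι ι' : Type*) : IsPiSystem (CgenA ι ι' α) :=
  IsPiSystem.pi fun _ => rect_pi ι'

lemma cgenA_univ_mem (ι ι' : Type*) : (univ : Set (ι → ι' → α)) ∈ CgenA ι ι' α :=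
  ⟨fun _ => univ, fun _ _ => rect_univ_mem ι', by simp⟩

def CgenB (ι α : Type*) (ι' β : Type*) [MeasurableSpace α] [MeasurableSpace β] :
    Set (Set (ι → α × (ι' → β))) :=
  pi univ '' pi univ (fun _ : ι => Cco α β ι')

lemma cgenB_gen (ι ι' : Type*) [Finite ι] [Finite ι'] :
    MeasurableSpace.generateFrom (CgenB ι α ι' β) = MeasurableSpace.pi :=
  generateFrom_eq_pi (fun _ => cco_gen ι') (fun _ => cco_span ι')

lemma cgenB_pi (ι ι' : Type*) : IsPiSystem (CgenB ι α ι' β) :=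
  IsPiSystem.pi fun _ => cco_pi ι'

lemma cgenB_univ_mem (ι ι' : Type*) : (univ : Set (ι → α × (ι' → β))) ∈ CgenB ι α ι' β :=
  ⟨fun _ => univ, fun _ _ => cco_univ_mem ι', by simp⟩

lemma mem_gen_measurableSet {C : Set (Set α)}
    (hgen : MeasurableSpace.generateFrom C = ‹MeasurableSpace α›)
    {s : Set α} (hs : s ∈ C) : MeasurableSet s :=
  hgen ▸ MeasurableSpace.measurableSet_generateFrom hs

end Stmt19Aux
end AuxSection

/-- A finite permutation of `ℕ`. -/
def FinitePerm (σ : Equiv.Perm ℕ) : Prop := {n | σ n ≠ n}.Finite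

/-- The array `ξ` is row exchangeable. -/
def RowExchangeable {Ω S : Type*} [MeasurableSpace Ω] [MeasurableSpace S]
    (P : Measure Ω) (ξ : ℕ → ℕ → Ω → S) : Prop :=
  (∀ (i : ℕ) (τ : Equiv.Perm ℕ), FinitePerm τ →
    Measure.map (fun ω (j : ℕ) => ξ i (τ j) ω) P = Measure.map (fun ω (j : ℕ) => ξ i j ω) P) ∧
  (∀ σ : Equiv.Perm ℕ, FinitePerm σ →
    Measure.map (fun ω (i j : ℕ) => ξ (σ i) j ω) P
      = Measure.map (fun ω (i j : ℕ) => ξ i j ω) P)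

open Stmt19Aux in
private theorem stmt19_core {Ω S : Type*} (Gm HM : MeasurableSpace Ω) [MeasurableSpace Ω]
    [MetricSpace S] [CompleteSpace S] [SeparableSpace S] [MeasurableSpace S] [BorelSpace S]
    (P : Measure Ω) [IsProbabilityMeasure P]
    (ξ : ℕ → ℕ → Ω → S) (hξ : ∀ i j, Measurable (ξ i j))
    (μ : ℕ → Ω → Measure S) (hμm : ∀ i, Measurable (μ i))
    (hμp : ∀ i ω, IsProbabilityMeasure (μ i ω))
    (m M N : ℕ) (hmM : m < M)
    (hGmdef : Gm = MeasurableSpace.comap (fun ω (i : Fin m) => μ (i : ℕ) ω) inferInstance)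
    (hHMdef : HM = MeasurableSpace.comap (fun ω (i : Fin M) => μ (i : ℕ) ω) inferInstance)
    (hcond : ∀ (m n : ℕ) (A : Fin m → Fin n → Set S), (∀ i j, MeasurableSet (A i j)) →
      P[Set.indicator {ω | ∀ (i : Fin m) (j : Fin n), ξ (i : ℕ) (j : ℕ) ω ∈ A i j}
          (fun _ => (1:ℝ)) |
          MeasurableSpace.comap (fun ω (i : Fin m) => μ (i : ℕ) ω) inferInstance]
        =ᵐ[P] fun ω => ∏ i : Fin m, ∏ j : Fin n, ((μ (i : ℕ) ω) (A i j)).toReal) :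
    ∀ (A : Set (Fin m → Fin N → S)) (B : Set (Fin (M - m) → Measure S × (Fin N → S))),
      MeasurableSet A → MeasurableSet B →
      P[Set.indicator
          ((fun ω (i : Fin m) (j : Fin N) => ξ (i : ℕ) (j : ℕ) ω) ⁻¹' A ∩
            (fun ω (k : Fin (M - m)) =>
              (μ (m + (k : ℕ)) ω, fun j : Fin N => ξ (m + (k : ℕ)) (j : ℕ) ω)) ⁻¹' B)
          (fun _ => (1:ℝ)) | Gm]
        =ᵐ[P] fun ω =>
          ((P[Set.indicator ((fun ω' (i : Fin m) (j : Fin N) => ξ (i : ℕ) (j : ℕ) ω') ⁻¹' A)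
              (fun _ => (1:ℝ)) | Gm]) ω) *
          ((P[Set.indicator
              ((fun ω' (k : Fin (M - m)) =>
                (μ (m + (k : ℕ)) ω', fun j : Fin N => ξ (m + (k : ℕ)) (j : ℕ) ω')) ⁻¹' B)
              (fun _ => (1:ℝ)) | Gm]) ω) := by
  intro A B hA hB
  have hφm : Measurable (fun ω (i : Fin m) => μ (i : ℕ) ω) :=
    measurable_pi_lambda _ fun i => hμm _
  have hφM : Measurable (fun ω (i : Fin M) => μ (i : ℕ) ω) :=
    measurable_pi_lambda _ fun i => hμm _
  have hG : Gm ≤ ‹MeasurableSpace Ω› := by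
    rw [hGmdef]; rintro s ⟨t, ht, rfl⟩; exact hφm ht
  have hH : HM ≤ ‹MeasurableSpace Ω› := by
    rw [hHMdef]; rintro s ⟨t, ht, rfl⟩; exact hφM ht
  have hGH : Gm ≤ HM := by
    rw [hGmdef, hHMdef]
    rintro s ⟨t, ht, rfl⟩
    refine ⟨(fun v : Fin M → Measure S => fun i : Fin m =>
      v ⟨(i : ℕ), lt_trans i.isLt hmM⟩) ⁻¹' t,
      (measurable_pi_lambda _ fun i => measurable_pi_apply _) ht, ?_⟩
    rw [Set.preimage_preimage]
  haveI hSF : SigmaFinite (P.trim hG) := by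
    have := isFiniteMeasure_trim (μ := P) hG
    infer_instance
  set X : Ω → Fin m → Fin N → S := fun ω (i : Fin m) (j : Fin N) => ξ (i : ℕ) (j : ℕ) ω
    with hXdef
  set Y : Ω → Fin (M - m) → Measure S × (Fin N → S) := fun ω (k : Fin (M - m)) =>
    (μ (m + (k : ℕ)) ω, fun j : Fin N => ξ (m + (k : ℕ)) (j : ℕ) ω) with hYdef
  have hXm : Measurable X :=
    measurable_pi_lambda _ fun i => measurable_pi_lambda _ fun j => hξ _ _
  have hYm : Measurable Y :=
    measurable_pi_lambda _ fun k =>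
      Measurable.prodMk (hμm _) (measurable_pi_lambda _ fun j => hξ _ _)
  have hind : ∀ (E : Set Ω), MeasurableSet E →
      Integrable (E.indicator (fun _ => (1:ℝ))) P :=
    fun E hE => (integrable_const (1:ℝ)).indicator hE

  have memA_meas : ∀ A' ∈ CgenA (Fin m) (Fin N) S, MeasurableSet A' :=
    fun A' h => mem_gen_measurableSet (cgenA_gen _ _) h
  have memB_meas : ∀ B' ∈ CgenB (Fin (M - m)) (Measure S) (Fin N) S, MeasurableSet B' :=
    fun B' h => mem_gen_measurableSet (cgenB_gen _ _) h
  have base0 : ∀ A' ∈ CgenA (Fin m) (Fin N) S,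
      ∀ B' ∈ CgenB (Fin (M - m)) (Measure S) (Fin N) S,
      ∀ C : Set Ω, MeasurableSet[Gm] C →
      (P (X ⁻¹' A' ∩ (Y ⁻¹' B' ∩ C))).toReal
        = ∫ ω in Y ⁻¹' B' ∩ C, (P[(X ⁻¹' A').indicator (fun _ => (1:ℝ))|Gm]) ω ∂P := by
    rintro A' hA' B' hB' C hC
    obtain ⟨t, ht, rfl⟩ := hA'
    choose a ha hta using fun i => ht i (Set.mem_univ i)
    have ham : ∀ i j, MeasurableSet (a i j) := fun i j => ha i j (Set.mem_univ j)
    obtain ⟨u, hu, rfl⟩ := hB'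
    choose cc hcc rr hrr hcru using fun k => hu k (Set.mem_univ k)
    choose d hd hdr using fun k => hrr k
    have hdm : ∀ k j, MeasurableSet (d k j) := fun k j => hd k j (Set.mem_univ j)
    set E1 : Set Ω := {ω | ∀ (i : Fin m) (j : Fin N), ξ (i : ℕ) (j : ℕ) ω ∈ a i j} with hE1def
    set E2 : Set Ω := {ω | ∀ (k : Fin (M - m)) (j : Fin N),
      ξ (m + (k : ℕ)) (j : ℕ) ω ∈ d k j} with hE2def
    set F : Set Ω := {ω | ∀ k : Fin (M - m), μ (m + (k : ℕ)) ω ∈ cc k} with hFdef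
    have hE1eq : X ⁻¹' Set.pi Set.univ t = E1 := by
      ext ω
      simp only [Set.mem_preimage, Set.mem_univ_pi, hE1def, Set.mem_setOf_eq]
      constructor
      · intro h i j
        have h2 := h i
        rw [← hta i] at h2
        exact h2 j (Set.mem_univ j)
      · intro h i
        rw [← hta i]
        exact fun j _ => h i j
    have hYBeq : Y ⁻¹' Set.pi Set.univ u = E2 ∩ F := by
      ext ω
      simp only [Set.mem_preimage, Set.mem_univ_pi, hE2def, hFdef, Set.mem_inter_iff,
        Set.mem_setOf_eq]
      constructor
      · intro h
        refine ⟨fun k j => ?_, fun k => ?_⟩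
        · have h2 := h k
          rw [← hcru k] at h2
          have h3 := h2.2
          rw [← hdr k] at h3
          exact h3 j (Set.mem_univ j)
        · have h2 := h k
          rw [← hcru k] at h2
          exact h2.1
      · rintro ⟨h2, hF⟩ k
        rw [← hcru k]
        exact ⟨hF k, by rw [← hdr k]; exact fun j _ => h2 k j⟩
    set f : Ω → ℝ := fun ω => ∏ i : Fin m, ∏ j : Fin N, ((μ (i : ℕ) ω) (a i j)).toReal
      with hfdef
    set g : Ω → ℝ := fun ω => ∏ k : Fin (M - m), ∏ j : Fin N,
      ((μ (m + (k : ℕ)) ω) (d k j)).toReal with hgdef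
    have hcond1 : P[E1.indicator (fun _ => (1:ℝ))|Gm] =ᵐ[P] f := by
      have h := hcond m N a ham
      rw [← hGmdef] at h
      exact h
    -- level M data
    set atil : Fin M → Fin N → Set S := fun i j =>
      if h : (i : ℕ) < m then a ⟨(i : ℕ), h⟩ j
      else d ⟨(i : ℕ) - m, Nat.sub_lt_sub_right (Nat.le_of_not_lt h) i.isLt⟩ j with hatil
    have hatilm : ∀ i j, MeasurableSet (atil i j) := by
      intro i j
      simp only [hatil]
      split
      · exact ham _ _
      · exact hdm _ _
    have hidxk : ∀ (k : Fin (M - m)) (pf : m + (k : ℕ) - m < M - m),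
        (⟨m + (k : ℕ) - m, pf⟩ : Fin (M - m)) = k := by
      intro k pf
      apply Fin.ext
      simp only [Fin.val_mk]
      omega
    have hkMlt : ∀ k : Fin (M - m), m + (k : ℕ) < M := fun k => lt_tsub_iff_left.mp k.isLt
    have hevM : {ω | ∀ (i : Fin M) (j : Fin N), ξ (i : ℕ) (j : ℕ) ω ∈ atil i j}
        = E1 ∩ E2 := by
      ext ω
      simp only [Set.mem_setOf_eq, Set.mem_inter_iff, hE1def, hE2def]
      constructor
      · intro h
        constructor
        · intro i j
          have h2 := h ⟨(i : ℕ), lt_trans i.isLt hmM⟩ j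
          simp only [hatil] at h2
          rw [dif_pos i.isLt] at h2
          simpa using h2
        · intro k j
          have h2 := h ⟨m + (k : ℕ), hkMlt k⟩ j
          simp only [hatil] at h2
          rw [dif_neg (Nat.not_lt.mpr (Nat.le_add_right m (k : ℕ)))] at h2
          rw [hidxk] at h2
          exact h2
      · rintro ⟨h1, h2⟩ i j
        simp only [hatil]
        by_cases hi : (i : ℕ) < m
        · rw [dif_pos hi]
          exact h1 ⟨(i : ℕ), hi⟩ j
        · rw [dif_neg hi]
          have h3 := h2 ⟨(i : ℕ) - m, Nat.sub_lt_sub_right (Nat.le_of_not_lt hi) i.isLt⟩ j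
          have he : m + ((i : ℕ) - m) = (i : ℕ) := by omega
          rw [he] at h3
          exact h3
    have hsplit : ∀ (c : Fin M → Fin N → Set S) (ω : Ω),
        (∏ i : Fin M, ∏ j : Fin N, ((μ (i : ℕ) ω) (c i j)).toReal)
          = (∏ i : Fin m, ∏ j : Fin N,
              ((μ (i : ℕ) ω) (c ⟨(i : ℕ), lt_trans i.isLt hmM⟩ j)).toReal)
            * ∏ k : Fin (M - m), ∏ j : Fin N,
                ((μ (m + (k : ℕ)) ω) (c ⟨m + (k : ℕ), hkMlt k⟩ j)).toReal := by
      intro c ω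
      have hMK : M = m + (M - m) := by omega
      rw [← Equiv.prod_comp (finCongr hMK.symm)
        (fun i : Fin M => ∏ j : Fin N, ((μ (i : ℕ) ω) (c i j)).toReal)]
      rw [Fin.prod_univ_add]
      rfl
    have hprodM : (fun ω => ∏ i : Fin M, ∏ j : Fin N, ((μ (i : ℕ) ω) (atil i j)).toReal)
        = fun ω => f ω * g ω := by
      funext ω
      rw [hsplit atil ω]
      have h1 : (∏ i : Fin m, ∏ j : Fin N,
          ((μ (i : ℕ) ω) (atil ⟨(i : ℕ), lt_trans i.isLt hmM⟩ j)).toReal) = f ω := by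
        refine Finset.prod_congr rfl fun i _ => Finset.prod_congr rfl fun j _ => ?_
        simp only [hatil]
        rw [dif_pos (show ((⟨(i : ℕ), lt_trans i.isLt hmM⟩ : Fin M) : ℕ) < m from i.isLt)]
      have h2 : (∏ k : Fin (M - m), ∏ j : Fin N,
          ((μ (m + (k : ℕ)) ω) (atil ⟨m + (k : ℕ), hkMlt k⟩ j)).toReal) = g ω := by
        refine Finset.prod_congr rfl fun k _ => Finset.prod_congr rfl fun j _ => ?_
        simp only [hatil]
        rw [dif_neg (Nat.not_lt.mpr (Nat.le_add_right m (k : ℕ)))]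
        rw [hidxk]
      rw [h1, h2]
    have hcondM : P[(E1 ∩ E2).indicator (fun _ => (1:ℝ))|HM] =ᵐ[P] fun ω => f ω * g ω := by
      have h := hcond M N atil hatilm
      rw [← hHMdef, hevM, hprodM] at h
      exact h
    -- level M data for E2 alone
    set btil : Fin M → Fin N → Set S := fun i j =>
      if (i : ℕ) < m then (Set.univ : Set S) else atil i j with hbtil
    have hbtilm : ∀ i j, MeasurableSet (btil i j) := by
      intro i j
      simp only [hbtil]
      split
      · exact MeasurableSet.univ
      · exact hatilm _ _
    have hevM2 : {ω | ∀ (i : Fin M) (j : Fin N), ξ (i : ℕ) (j : ℕ) ω ∈ btil i j} = E2 := by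
      ext ω
      simp only [Set.mem_setOf_eq, hE2def]
      constructor
      · intro h k j
        have h2 := h ⟨m + (k : ℕ), hkMlt k⟩ j
        simp only [hbtil, hatil] at h2
        rw [if_neg (Nat.not_lt.mpr (Nat.le_add_right m (k : ℕ))),
          dif_neg (Nat.not_lt.mpr (Nat.le_add_right m (k : ℕ)))] at h2
        rw [hidxk] at h2
        exact h2
      · intro h i j
        simp only [hbtil, hatil]
        by_cases hi : (i : ℕ) < m
        · rw [if_pos hi]
          exact Set.mem_univ _
        · rw [if_neg hi, dif_neg hi]
          have h3 := h ⟨(i : ℕ) - m, Nat.sub_lt_sub_right (Nat.le_of_not_lt hi) i.isLt⟩ j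
          have he : m + ((i : ℕ) - m) = (i : ℕ) := by omega
          rw [he] at h3
          exact h3
    have hprodM2 : (fun ω => ∏ i : Fin M, ∏ j : Fin N, ((μ (i : ℕ) ω) (btil i j)).toReal)
        = g := by
      funext ω
      rw [hsplit btil ω]
      have h1 : (∏ i : Fin m, ∏ j : Fin N,
          ((μ (i : ℕ) ω) (btil ⟨(i : ℕ), lt_trans i.isLt hmM⟩ j)).toReal) = 1 := by
        refine Finset.prod_eq_one fun i _ => Finset.prod_eq_one fun j _ => ?_
        simp only [hbtil]
        rw [if_pos (show ((⟨(i : ℕ), lt_trans i.isLt hmM⟩ : Fin M) : ℕ) < m from i.isLt)]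
        haveI := hμp (i : ℕ) ω
        simp
      rw [h1, one_mul]
      refine Finset.prod_congr rfl fun k _ => Finset.prod_congr rfl fun j _ => ?_
      simp only [hbtil, hatil]
      rw [if_neg (Nat.not_lt.mpr (Nat.le_add_right m (k : ℕ))),
        dif_neg (Nat.not_lt.mpr (Nat.le_add_right m (k : ℕ)))]
      rw [hidxk]
    have hcondM2 : P[E2.indicator (fun _ => (1:ℝ))|HM] =ᵐ[P] g := by
      have h := hcond M N btil hbtilm
      rw [← hHMdef, hevM2, hprodM2] at h
      exact h
    -- measurability and bounds
    have hφGm : Measurable[Gm] (fun ω (i : Fin m) => μ (i : ℕ) ω) := by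
      rw [hGmdef]
      exact measurable_iff_comap_le.mpr le_rfl
    have hφHM : Measurable[HM] (fun ω (i : Fin M) => μ (i : ℕ) ω) := by
      rw [hHMdef]
      exact measurable_iff_comap_le.mpr le_rfl
    have hfGm : StronglyMeasurable[Gm] f := by
      have hout : Measurable (fun v : Fin m → Measure S =>
          ∏ i : Fin m, ∏ j : Fin N, ((v i) (a i j)).toReal) := by
        refine Finset.measurable_prod _ fun i _ => Finset.measurable_prod _ fun j _ => ?_
        exact ((Measure.measurable_coe (ham i j)).comp (measurable_pi_apply i)).ennreal_toReal
      exact (hout.comp hφGm).stronglyMeasurable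
    have hgHM : StronglyMeasurable[HM] g := by
      have hout : Measurable (fun v : Fin M → Measure S =>
          ∏ k : Fin (M - m), ∏ j : Fin N,
            ((v ⟨m + (k : ℕ), hkMlt k⟩) (d k j)).toReal) := by
        refine Finset.measurable_prod _ fun k _ => Finset.measurable_prod _ fun j _ => ?_
        exact ((Measure.measurable_coe (hdm k j)).comp (measurable_pi_apply (⟨m + (k : ℕ), hkMlt k⟩ : Fin M))).ennreal_toReal
      exact (hout.comp hφHM).stronglyMeasurable
    have hfac01 : ∀ (i : ℕ) (ω : Ω) (s : Set S),
        0 ≤ ((μ i ω) s).toReal ∧ ((μ i ω) s).toReal ≤ 1 := by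
      intro i ω s
      refine ⟨ENNReal.toReal_nonneg, ?_⟩
      haveI := hμp i ω
      have h1 : (μ i ω) s ≤ 1 := prob_le_one
      calc ((μ i ω) s).toReal ≤ (1 : ENNReal).toReal := ENNReal.toReal_mono ENNReal.one_ne_top h1
        _ = 1 := by simp
    have hf01 : ∀ ω, 0 ≤ f ω ∧ f ω ≤ 1 := by
      intro ω
      constructor
      · exact Finset.prod_nonneg fun i _ =>
          Finset.prod_nonneg fun j _ => (hfac01 _ _ _).1
      · exact Finset.prod_le_one
          (fun i _ => Finset.prod_nonneg fun j _ => (hfac01 _ _ _).1)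
          (fun i _ => Finset.prod_le_one (fun j _ => (hfac01 _ _ _).1)
            (fun j _ => (hfac01 _ _ _).2))
    -- sets measurability
    have hFH : MeasurableSet[HM] F := by
      rw [hHMdef]
      refine ⟨{v : Fin M → Measure S |
        ∀ k : Fin (M - m), v ⟨m + (k : ℕ), hkMlt k⟩ ∈ cc k}, ?_, ?_⟩
      · have heq : {v : Fin M → Measure S |
            ∀ k : Fin (M - m), v ⟨m + (k : ℕ), hkMlt k⟩ ∈ cc k}
              = ⋂ k : Fin (M - m), (fun v : Fin M → Measure S =>
                  v ⟨m + (k : ℕ), hkMlt k⟩) ⁻¹' cc k := by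
          ext v
          simp [Set.mem_iInter]
        rw [heq]
        exact MeasurableSet.iInter fun k => (measurable_pi_apply _) (hcc k)
      · rfl
    have hE1m : MeasurableSet E1 := by
      have heq : E1 = ⋂ (i : Fin m), ⋂ (j : Fin N), ξ (i : ℕ) (j : ℕ) ⁻¹' a i j := by
        ext ω
        simp [hE1def, Set.mem_iInter]
      rw [heq]
      exact MeasurableSet.iInter fun i => MeasurableSet.iInter fun j => (hξ _ _) (ham i j)
    have hE2m : MeasurableSet E2 := by
      have heq : E2 = ⋂ (k : Fin (M - m)), ⋂ (j : Fin N),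
          ξ (m + (k : ℕ)) (j : ℕ) ⁻¹' d k j := by
        ext ω
        simp [hE2def, Set.mem_iInter]
      rw [heq]
      exact MeasurableSet.iInter fun k => MeasurableSet.iInter fun j => (hξ _ _) (hdm k j)
    have hFm : MeasurableSet F := hH _ hFH
    have hCH : MeasurableSet[HM] C := hGH _ hC
    have hCamb : MeasurableSet C := hG _ hC
    have hkHsm : StronglyMeasurable[HM] ((F ∩ C).indicator (fun _ => (1:ℝ))) :=
      stronglyMeasurable_const.indicator (hFH.inter hCH)
    have hindbd : ∀ (U : Set Ω) (ω : Ω), ‖U.indicator (fun _ => (1:ℝ)) ω‖ ≤ 1 := by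
      intro U ω
      by_cases h : ω ∈ U <;> simp [h]
    have hbd1 : ∀ᵐ ω ∂P, ‖(F ∩ C).indicator (fun _ => (1:ℝ)) ω * f ω‖ ≤ 1 := by
      refine Filter.Eventually.of_forall fun ω => ?_
      rw [norm_mul]
      calc ‖(F ∩ C).indicator (fun _ => (1:ℝ)) ω‖ * ‖f ω‖ ≤ 1 * 1 := by
            refine mul_le_mul (hindbd _ _) ?_ (norm_nonneg _) zero_le_one
            rw [Real.norm_eq_abs, abs_of_nonneg (hf01 ω).1]
            exact (hf01 ω).2
        _ = 1 := one_mul 1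
    have hbd2 : ∀ᵐ ω ∂P, ‖(F ∩ C).indicator (fun _ => (1:ℝ)) ω‖ ≤ 1 :=
      Filter.Eventually.of_forall fun ω => hindbd _ _
    -- the two chains
    have hR : ∫ ω in (E2 ∩ F) ∩ C, (P[E1.indicator (fun _ => (1:ℝ))|Gm]) ω ∂P
        = ∫ ω, ((F ∩ C).indicator (fun _ => (1:ℝ)) ω * f ω) * g ω ∂P := by
      calc ∫ ω in (E2 ∩ F) ∩ C, (P[E1.indicator (fun _ => (1:ℝ))|Gm]) ω ∂P
          = ∫ ω in (E2 ∩ F) ∩ C, f ω ∂P :=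
            integral_congr_ae (ae_restrict_of_ae hcond1)
        _ = ∫ ω, ((E2 ∩ F) ∩ C).indicator (fun _ => (1:ℝ)) ω * f ω ∂P :=
            aux_si ((hE2m.inter hFm).inter hCamb) _
        _ = ∫ ω, ((F ∩ C).indicator (fun _ => (1:ℝ)) ω * f ω)
              * E2.indicator (fun _ => (1:ℝ)) ω ∂P := by
            congr 1
            funext ω
            simp only [aux_ind_inter]
            ring
        _ = ∫ ω, ((F ∩ C).indicator (fun _ => (1:ℝ)) ω * f ω)
              * (P[E2.indicator (fun _ => (1:ℝ))|HM]) ω ∂P :=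
            aux_pull hH ((hkHsm.mul (hfGm.mono hGH)).aestronglyMeasurable) hbd1
              (hind _ hE2m)
        _ = ∫ ω, ((F ∩ C).indicator (fun _ => (1:ℝ)) ω * f ω) * g ω ∂P :=
            integral_congr_ae (by filter_upwards [hcondM2] with ω hω; rw [hω])
    have hL : (P (E1 ∩ ((E2 ∩ F) ∩ C))).toReal
        = ∫ ω, ((F ∩ C).indicator (fun _ => (1:ℝ)) ω * f ω) * g ω ∂P := by
      calc (P (E1 ∩ ((E2 ∩ F) ∩ C))).toReal
          = ∫ ω, (E1 ∩ ((E2 ∩ F) ∩ C)).indicator (fun _ => (1:ℝ)) ω ∂P :=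
            (integral_indicator_one (hE1m.inter ((hE2m.inter hFm).inter hCamb))).symm
        _ = ∫ ω, (F ∩ C).indicator (fun _ => (1:ℝ)) ω
              * (E1 ∩ E2).indicator (fun _ => (1:ℝ)) ω ∂P := by
            congr 1
            funext ω
            simp only [aux_ind_inter]
            ring
        _ = ∫ ω, (F ∩ C).indicator (fun _ => (1:ℝ)) ω
              * (P[(E1 ∩ E2).indicator (fun _ => (1:ℝ))|HM]) ω ∂P :=
            aux_pull hH hkHsm.aestronglyMeasurable hbd2 (hind _ (hE1m.inter hE2m))
        _ = ∫ ω, (F ∩ C).indicator (fun _ => (1:ℝ)) ω * (f ω * g ω) ∂P :=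
            integral_congr_ae (by filter_upwards [hcondM] with ω hω; rw [hω])
        _ = ∫ ω, ((F ∩ C).indicator (fun _ => (1:ℝ)) ω * f ω) * g ω ∂P := by
            congr 1
            funext ω
            ring
    rw [hE1eq, hYBeq]
    exact hL.trans hR.symm
  -- Stage over B via π-λ
  have stageB : ∀ A' ∈ CgenA (Fin m) (Fin N) S, ∀ C : Set Ω, MeasurableSet[Gm] C →
      ∀ B' : Set (Fin (M - m) → Measure S × (Fin N → S)), MeasurableSet B' →
      P (Y ⁻¹' B' ∩ (X ⁻¹' A' ∩ C))
        = ∫⁻ ω in Y ⁻¹' B' ∩ C,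
            ENNReal.ofReal ((P[(X ⁻¹' A').indicator (fun _ => (1:ℝ))|Gm]) ω) ∂P := by
    intro A' hA' C hC
    refine aux_stage hYm (cgenB_gen _ _) (cgenB_pi _ _) (cgenB_univ_mem _ _)
      ((hXm (memA_meas _ hA')).inter (hG _ hC)) (hG _ hC)
      ((stronglyMeasurable_condExp.mono hG).measurable) ?_ ?_
    · intro B' hB'
      rw [aux_conv hG, Set.inter_left_comm, ← base0 A' hA' B' hB' C hC,
        ENNReal.ofReal_toReal (measure_ne_top P _)]
    · rw [aux_conv hG]
      exact ENNReal.ofReal_ne_top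
  -- convert, using the double pull-out
  have real2 : ∀ A' ∈ CgenA (Fin m) (Fin N) S,
      ∀ B' : Set (Fin (M - m) → Measure S × (Fin N → S)), MeasurableSet B' →
      ∀ C : Set Ω, MeasurableSet[Gm] C →
      (P (X ⁻¹' A' ∩ (Y ⁻¹' B' ∩ C))).toReal
        = ∫ ω in X ⁻¹' A',
            (P[(Y ⁻¹' B' ∩ C).indicator (fun _ => (1:ℝ))|Gm]) ω ∂P := by
    intro A' hA' B' hB' C hC
    have h1 := stageB A' hA' C hC B' hB'
    rw [aux_conv hG] at h1
    rw [Set.inter_left_comm] at h1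
    rw [h1, ENNReal.toReal_ofReal (aux_setint_nonneg hG)]
    exact aux_po hG (hXm (memA_meas _ hA')) ((hYm hB').inter (hG _ hC))
  -- Stage over A via π-λ
  have stageA : ∀ B' : Set (Fin (M - m) → Measure S × (Fin N → S)), MeasurableSet B' →
      ∀ C : Set Ω, MeasurableSet[Gm] C →
      ∀ A' : Set (Fin m → Fin N → S), MeasurableSet A' →
      P (X ⁻¹' A' ∩ (Y ⁻¹' B' ∩ C))
        = ∫⁻ ω in X ⁻¹' A' ∩ Set.univ,
            ENNReal.ofReal ((P[(Y ⁻¹' B' ∩ C).indicator (fun _ => (1:ℝ))|Gm]) ω) ∂P := by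
    intro B' hB' C hC
    refine aux_stage hXm (cgenA_gen _ _) (cgenA_pi _ _) (cgenA_univ_mem _ _)
      ((hYm hB').inter (hG _ hC)) MeasurableSet.univ
      ((stronglyMeasurable_condExp.mono hG).measurable) ?_ ?_
    · intro A' hA'
      rw [Set.inter_univ, aux_conv hG, ← real2 A' hA' B' hB' C hC,
        ENNReal.ofReal_toReal (measure_ne_top P _)]
    · rw [aux_conv hG]
      exact ENNReal.ofReal_ne_top
  -- the symmetric real identity for all measurable A', B'
  have realfinal : ∀ A' : Set (Fin m → Fin N → S), MeasurableSet A' →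
      ∀ B' : Set (Fin (M - m) → Measure S × (Fin N → S)), MeasurableSet B' →
      ∀ C : Set Ω, MeasurableSet[Gm] C →
      ∫ ω in Y ⁻¹' B' ∩ C, (P[(X ⁻¹' A').indicator (fun _ => (1:ℝ))|Gm]) ω ∂P
        = (P ((X ⁻¹' A' ∩ Y ⁻¹' B') ∩ C)).toReal := by
    intro A' hA' B' hB' C hC
    have h1 := stageA B' hB' C hC A' hA'
    rw [Set.inter_univ, aux_conv hG] at h1
    have h2 : (P (X ⁻¹' A' ∩ (Y ⁻¹' B' ∩ C))).toReal
        = ∫ ω in X ⁻¹' A', (P[(Y ⁻¹' B' ∩ C).indicator (fun _ => (1:ℝ))|Gm]) ω ∂P := by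
      rw [h1, ENNReal.toReal_ofReal (aux_setint_nonneg hG)]
    rw [← aux_po hG ((hYm hB').inter (hG _ hC)) (hXm hA'), ← h2, Set.inter_assoc]
  -- final assembly
  refine (ae_eq_condExp_of_forall_setIntegral_eq hG
    (hind _ ((hXm hA).inter (hYm hB))) ?_ ?_ ?_).symm
  · intro s hs hfin
    refine Integrable.integrableOn ?_
    exact integrable_condExp.bdd_mul (aux_aesm hG stronglyMeasurable_condExp.aestronglyMeasurable)
      (aux_bd hG (hXm hA))
  · intro s hs hfin
    have hsm : MeasurableSet s := hG _ hs
    -- right side is the measure of the triple intersection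
    have hRHS : ∫ ω in s, (X ⁻¹' A ∩ Y ⁻¹' B).indicator (fun _ => (1:ℝ)) ω ∂P
        = (P ((X ⁻¹' A ∩ Y ⁻¹' B) ∩ s)).toReal := by
      rw [setIntegral_indicator ((hXm hA).inter (hYm hB)), setIntegral_const, smul_eq_mul,
        mul_one, Set.inter_comm, measureReal_def]
    rw [hRHS]
    -- left side
    have hk : AEStronglyMeasurable[Gm]
        (fun ω => s.indicator (fun _ => (1:ℝ)) ω
          * (P[(X ⁻¹' A).indicator (fun _ => (1:ℝ))|Gm]) ω) P :=
      ((stronglyMeasurable_const.indicator hs).mul stronglyMeasurable_condExp).aestronglyMeasurable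
    have hkbd : ∀ᵐ ω ∂P, ‖s.indicator (fun _ => (1:ℝ)) ω
        * (P[(X ⁻¹' A).indicator (fun _ => (1:ℝ))|Gm]) ω‖ ≤ 1 := by
      filter_upwards [aux_bd hG (hXm hA)] with ω h1
      rw [norm_mul]
      have h2 : ‖s.indicator (fun _ => (1:ℝ)) ω‖ ≤ 1 := by
        by_cases h : ω ∈ s <;> simp [h]
      calc ‖s.indicator (fun _ => (1:ℝ)) ω‖ * ‖(P[(X ⁻¹' A).indicator (fun _ => (1:ℝ))|Gm]) ω‖
          ≤ 1 * 1 := mul_le_mul h2 h1 (norm_nonneg _) zero_le_one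
        _ = 1 := one_mul 1
    calc ∫ ω in s, (P[(X ⁻¹' A).indicator (fun _ => (1:ℝ))|Gm]) ω
            * (P[(Y ⁻¹' B).indicator (fun _ => (1:ℝ))|Gm]) ω ∂P
        = ∫ ω, s.indicator (fun _ => (1:ℝ)) ω
            * ((P[(X ⁻¹' A).indicator (fun _ => (1:ℝ))|Gm]) ω
              * (P[(Y ⁻¹' B).indicator (fun _ => (1:ℝ))|Gm]) ω) ∂P := aux_si (hG _ hs) _
      _ = ∫ ω, (s.indicator (fun _ => (1:ℝ)) ω * (P[(X ⁻¹' A).indicator (fun _ => (1:ℝ))|Gm]) ω)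
            * (P[(Y ⁻¹' B).indicator (fun _ => (1:ℝ))|Gm]) ω ∂P := by
          congr 1; funext ω; ring
      _ = ∫ ω, (s.indicator (fun _ => (1:ℝ)) ω * (P[(X ⁻¹' A).indicator (fun _ => (1:ℝ))|Gm]) ω)
            * (Y ⁻¹' B).indicator (fun _ => (1:ℝ)) ω ∂P :=
          (aux_pull hG hk hkbd (hind _ (hYm hB))).symm
      _ = ∫ ω, (Y ⁻¹' B ∩ s).indicator (fun _ => (1:ℝ)) ω
            * (P[(X ⁻¹' A).indicator (fun _ => (1:ℝ))|Gm]) ω ∂P := by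
          congr 1; funext ω; rw [aux_ind_inter]; ring
      _ = ∫ ω in Y ⁻¹' B ∩ s, (P[(X ⁻¹' A).indicator (fun _ => (1:ℝ))|Gm]) ω ∂P :=
          (aux_si ((hYm hB).inter (hG _ hs)) _).symm
      _ = (P ((X ⁻¹' A ∩ Y ⁻¹' B) ∩ s)).toReal := realfinal A hA B hB s hs
  · exact (stronglyMeasurable_condExp.mul stronglyMeasurable_condExp).aestronglyMeasurable


open Stmt19Aux in
/-- Markov-type property: given `μ₁,…,μ_m`, the block `{ξ_{ij} : i ≤ m, j ≤ N}` and the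
collection `{(μ_i, (ξ_{ij})_{j ≤ N}) : m < i ≤ M}` are conditionally independent. -/
theorem stmt19 {Ω S : Type*} [MeasurableSpace Ω]
    [MetricSpace S] [CompleteSpace S] [SeparableSpace S] [MeasurableSpace S] [BorelSpace S]
    (P : Measure Ω) [IsProbabilityMeasure P]
    (ξ : ℕ → ℕ → Ω → S) (hξ : ∀ i j, Measurable (ξ i j))
    (hre : RowExchangeable P ξ)
    (μ : ℕ → Ω → Measure S) (hμm : ∀ i, Measurable (μ i))
    (hμp : ∀ i ω, IsProbabilityMeasure (μ i ω))
    -- conditionally on `μ₁,…,μ_m`, the entries of each `m × n` block are independent with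
    -- `ξ_{ij} ∼ μ_i`
    (hcond : ∀ (m n : ℕ) (A : Fin m → Fin n → Set S), (∀ i j, MeasurableSet (A i j)) →
      P[Set.indicator {ω | ∀ (i : Fin m) (j : Fin n), ξ (i : ℕ) (j : ℕ) ω ∈ A i j}
          (fun _ => (1:ℝ)) |
          MeasurableSpace.comap (fun ω (i : Fin m) => μ (i : ℕ) ω) inferInstance]
        =ᵐ[P] fun ω => ∏ i : Fin m, ∏ j : Fin n, ((μ (i : ℕ) ω) (A i j)).toReal)
    (m M N : ℕ) (hmM : m < M) :
    ∀ (A : Set (Fin m → Fin N → S)) (B : Set (Fin (M - m) → Measure S × (Fin N → S))),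
      MeasurableSet A → MeasurableSet B →
      P[Set.indicator
          ((fun ω (i : Fin m) (j : Fin N) => ξ (i : ℕ) (j : ℕ) ω) ⁻¹' A ∩
            (fun ω (k : Fin (M - m)) =>
              (μ (m + (k : ℕ)) ω, fun j : Fin N => ξ (m + (k : ℕ)) (j : ℕ) ω)) ⁻¹' B)
          (fun _ => (1:ℝ)) |
          MeasurableSpace.comap (fun ω (i : Fin m) => μ (i : ℕ) ω) inferInstance]
        =ᵐ[P] fun ω =>
          ((P[Set.indicator ((fun ω' (i : Fin m) (j : Fin N) => ξ (i : ℕ) (j : ℕ) ω') ⁻¹' A)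
              (fun _ => (1:ℝ)) |
              MeasurableSpace.comap (fun ω' (i : Fin m) => μ (i : ℕ) ω') inferInstance]) ω) *
          ((P[Set.indicator
              ((fun ω' (k : Fin (M - m)) =>
                (μ (m + (k : ℕ)) ω', fun j : Fin N => ξ (m + (k : ℕ)) (j : ℕ) ω')) ⁻¹' B)
              (fun _ => (1:ℝ)) |
              MeasurableSpace.comap (fun ω' (i : Fin m) => μ (i : ℕ) ω') inferInstance]) ω) :=
  stmt19_core _ _ P ξ hξ μ hμm hμp m M N hmM rfl rfl hcond
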